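/- arXiv:0801.4835 — 2 statements merged into one kernel-verified Lean document; each statement's English description precedes it below -/
import Mathlib

section
/- The ordinary triangle T := conv{(0,0), (2,1), (0,1)} ⊆ ℝ² is tropically convex, but T is not a tropical polytope: there is no finite set V ⊆ ℝ² with tconv(V) = T. -/
open Set

noncomputable section

/-- Extended (homogeneous) coordinates of a point of `TA^d ≅ ℝ^d`:
the 0-th coordinate is normalized to `0`. -/
def ext {d : ℕ} (x : Fin d → ℝ) : Fin (d + 1) → ℝ := Fin.cons 0 x

/-- The tropical combination of `(l, x)` and `(m, y)`. -/
def tropComb {d : ℕ} (l m : ℝ) (x y : Fin d → ℝ) : Fin d → ℝ :=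
  fun i => min (l + x i) (m + y i) - min l m

/-- A set is tropically convex if it is closed under tropical combinations. -/
def TropConvex {d : ℕ} (S : Set (Fin d → ℝ)) : Prop :=
  ∀ x ∈ S, ∀ y ∈ S, ∀ l m : ℝ, tropComb l m x y ∈ S

/-- The tropical convex hull: the intersection of all tropically convex supersets. -/
def tconv {d : ℕ} (V : Set (Fin d → ℝ)) : Set (Fin d → ℝ) :=
  ⋂₀ {S : Set (Fin d → ℝ) | TropConvex S ∧ V ⊆ S}

/-- A tropical polytope is the tropical convex hull of a finite set. -/
def IsTropPolytope {d : ℕ} (P : Set (Fin d → ℝ)) : Prop :=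
  ∃ V : Finset (Fin d → ℝ), P = tconv (V : Set (Fin d → ℝ))

/-- A polytrope is a tropical polytope which is also convex in the ordinary sense. -/
def IsPolytrope {d : ℕ} (P : Set (Fin d → ℝ)) : Prop :=
  IsTropPolytope P ∧ Convex ℝ P

/-- The H-description of the triangle. -/
lemma hull_eq_H : convexHull ℝ ({![0, 0], ![2, 1], ![0, 1]} : Set (Fin 2 → ℝ)) =
    {x : Fin 2 → ℝ | 0 ≤ x 0 ∧ x 1 ≤ 1 ∧ x 0 ≤ 2 * x 1} := by
  apply Set.Subset.antisymm
  · apply convexHull_min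
    · intro p hp
      simp only [Set.mem_insert_iff, Set.mem_singleton_iff] at hp
      rcases hp with h | h | h <;> subst h <;>
        refine ⟨by norm_num, by norm_num, by norm_num⟩
    · intro x hx y hy a b ha hb hab
      obtain ⟨hx0, hx1, hx2⟩ := hx
      obtain ⟨hy0, hy1, hy2⟩ := hy
      refine ⟨?_, ?_, ?_⟩ <;>
        simp only [Pi.add_apply, Pi.smul_apply, smul_eq_mul]
      · nlinarith [mul_nonneg ha hx0, mul_nonneg hb hy0]
      · nlinarith [mul_le_mul_of_nonneg_left hx1 ha, mul_le_mul_of_nonneg_left hy1 hb]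
      · nlinarith [mul_le_mul_of_nonneg_left hx2 ha, mul_le_mul_of_nonneg_left hy2 hb]
  · intro p hp
    obtain ⟨h0, h1, h2⟩ := hp
    have hmem : ∀ i : Fin 3,
        (![![0, 0], ![2, 1], ![0, 1]] : Fin 3 → Fin 2 → ℝ) i ∈
          convexHull ℝ ({![0, 0], ![2, 1], ![0, 1]} : Set (Fin 2 → ℝ)) := by
      intro i
      apply subset_convexHull
      fin_cases i <;> simp
    have key : (∑ i : Fin 3, (![1 - p 1, p 0 / 2, p 1 - p 0 / 2] : Fin 3 → ℝ) i •
        (![![0, 0], ![2, 1], ![0, 1]] : Fin 3 → Fin 2 → ℝ) i) = p := by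
      funext j
      fin_cases j <;>
        simp [Fin.sum_univ_three, Matrix.cons_val_zero, Matrix.cons_val_one,
          Matrix.head_cons, Matrix.vecHead, Matrix.vecTail]
    rw [← key]
    apply (convex_convexHull ℝ _).sum_mem
    · intro i _
      fin_cases i <;> simp <;> linarith
    · simp [Fin.sum_univ_three]
    · intro i _
      exact hmem i

/-- `H` is tropically convex. -/
lemma H_tropConvex :
    TropConvex {x : Fin 2 → ℝ | 0 ≤ x 0 ∧ x 1 ≤ 1 ∧ x 0 ≤ 2 * x 1} := by
  intro x hx y hy l m
  obtain ⟨hx0, hx1, hx2⟩ := hx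
  obtain ⟨hy0, hy1, hy2⟩ := hy
  refine ⟨?_, ?_, ?_⟩ <;> simp only [tropComb]
  · have h : min l m ≤ min (l + x 0) (m + y 0) :=
      le_min ((min_le_left l m).trans (by linarith)) ((min_le_right l m).trans (by linarith))
    linarith
  · rcases le_total l m with hlm | hlm
    · rw [min_eq_left hlm]
      linarith [min_le_left (l + x 1) (m + y 1)]
    · rw [min_eq_right hlm]
      linarith [min_le_right (l + x 1) (m + y 1)]
  · rcases le_total (l + x 1) (m + y 1) with hc | hc
    · rw [min_eq_left hc]
      linarith [min_le_left (l + x 0) (m + y 0), min_le_left l m]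
    · rw [min_eq_right hc]
      linarith [min_le_right (l + x 0) (m + y 0), min_le_right l m]

/-- If a tropical combination lands on the line `x 0 = 2 * x 1` (given both points are
below it), then it equals one of the two points. -/
lemma tropComb_edge {x y : Fin 2 → ℝ} (hx : x 0 ≤ 2 * x 1) (hy : y 0 ≤ 2 * y 1)
    (l m : ℝ) (h : tropComb l m x y 0 = 2 * tropComb l m x y 1) :
    tropComb l m x y = x ∨ tropComb l m x y = y := by
  simp only [tropComb] at h
  rcases le_total (l + x 1) (m + y 1) with hc | hc
  · left
    rw [min_eq_left hc] at h
    have h2 : min (l + x 0) (m + y 0) ≤ l + x 0 := min_le_left _ _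
    have h3 : min l m ≤ l := min_le_left _ _
    have e0 : min (l + x 0) (m + y 0) - min l m = x 0 := by linarith
    have e1 : min (l + x 1) (m + y 1) - min l m = x 1 := by
      rw [min_eq_left hc]; linarith
    funext i
    fin_cases i
    · exact e0
    · exact e1
  · right
    rw [min_eq_right hc] at h
    have h2 : min (l + x 0) (m + y 0) ≤ m + y 0 := min_le_right _ _
    have h3 : min l m ≤ m := min_le_right _ _
    have e0 : min (l + x 0) (m + y 0) - min l m = y 0 := by linarith
    have e1 : min (l + x 1) (m + y 1) - min l m = y 1 := by
      rw [min_eq_right hc]; linarith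
    funext i
    fin_cases i
    · exact e0
    · exact e1

/-- The ordinary triangle `conv{(0,0), (2,1), (0,1)} ⊆ ℝ²` is tropically
convex, yet it is not a tropical polytope: it is not the tropical convex hull of any
finite set. -/
theorem triangle_tropically_convex_not_tropical_polytope :
    TropConvex (convexHull ℝ ({![0, 0], ![2, 1], ![0, 1]} : Set (Fin 2 → ℝ))) ∧
      ¬∃ V : Finset (Fin 2 → ℝ),
        convexHull ℝ ({![0, 0], ![2, 1], ![0, 1]} : Set (Fin 2 → ℝ)) =
          tconv (V : Set (Fin 2 → ℝ)) := by
  constructor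
  · rw [hull_eq_H]
    exact H_tropConvex
  · rintro ⟨V, hV⟩
    -- every element of V lies in H
    have hVH : (V : Set (Fin 2 → ℝ)) ⊆
        {x : Fin 2 → ℝ | 0 ≤ x 0 ∧ x 1 ≤ 1 ∧ x 0 ≤ 2 * x 1} := by
      intro v hv
      rw [← hull_eq_H, hV]
      exact fun S hS => hS.2 hv
    -- the trimmed set S
    set S : Set (Fin 2 → ℝ) :=
      {x | (0 ≤ x 0 ∧ x 1 ≤ 1 ∧ x 0 ≤ 2 * x 1) ∧ (x 0 < 2 * x 1 ∨ x ∈ (V : Set (Fin 2 → ℝ)))}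
      with hSdef
    have hVS : (V : Set (Fin 2 → ℝ)) ⊆ S := fun v hv => ⟨hVH hv, Or.inr hv⟩
    have hStrop : TropConvex S := by
      intro x hx y hy l m
      have hz := H_tropConvex x hx.1 y hy.1 l m
      refine ⟨hz, ?_⟩
      rcases lt_or_eq_of_le hz.2.2 with hlt | heq
      · exact Or.inl hlt
      · rcases tropComb_edge hx.1.2.2 hy.1.2.2 l m heq with hzx | hzy
        · rw [hzx]; exact hx.2
        · rw [hzy]; exact hy.2
    have hsub : tconv (V : Set (Fin 2 → ℝ)) ⊆ S :=
      Set.sInter_subset_of_mem ⟨hStrop, hVS⟩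
    -- find a point on the open edge not in V
    set f : ℝ → (Fin 2 → ℝ) := fun t => ![2 * t, t] with hfdef
    have hinj : Function.Injective f := by
      intro a b hab
      have := congrFun hab 1
      simpa [hfdef] using this
    have hfin : (f ⁻¹' (V : Set (Fin 2 → ℝ))).Finite :=
      Set.Finite.preimage hinj.injOn V.finite_toSet
    obtain ⟨t, ht, htV⟩ : ∃ t ∈ Set.Icc (0 : ℝ) 1, f t ∉ (V : Set (Fin 2 → ℝ)) := by
      by_contra h'
      push_neg at h'
      exact (Set.Icc_infinite (by norm_num : (0:ℝ) < 1)) (hfin.subset h')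
    have hp0 : f t 0 = 2 * t := by simp [hfdef]
    have hp1 : f t 1 = t := by simp [hfdef]
    have hpH : f t ∈ convexHull ℝ ({![0, 0], ![2, 1], ![0, 1]} : Set (Fin 2 → ℝ)) := by
      rw [hull_eq_H]
      exact ⟨by rw [hp0]; linarith [ht.1], by rw [hp1]; exact ht.2, by rw [hp0, hp1]⟩
    have hpS : f t ∈ S := hsub (hV ▸ hpH)
    rcases hpS.2 with hlt | hmem
    · rw [hp0, hp1] at hlt; linarith
    · exact htV hmem

end
end

section
/- Let n ≥ 3 and let A ⊆ ℝ^{n−2} be the set of all points with coordinates (x_2, …, x_{n−1}) such that, setting x_1 := 0 and x_n := (n−1)², the inequalities x_j − x_i ≥ (i−j)² hold for all 1 ≤ i < j ≤ n. Then A (the Rote–Santos–Streinu realization Assoc_{n−2} of the (n−2)-dimensional associahedron) is a polytrope of affine dimension n−2; in particular, A is tropically convex (with respect to the identification of ℝ^{n−2} with TA^{n−2} in which the fixed coordinate x_1 = 0 plays the role of the normalized 0-th coordinate) and A is a tropical polytope. -/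
open Set

noncomputable section

/-- The full coordinate vector `(x_1, …, x_n)` (for `n = d + 2`) of a point
`y = (x_2, …, x_{n-1}) ∈ ℝ^{n-2}`, where `x_1 := 0` and `x_n := (n-1)^2`. -/
def assocCoords (d : ℕ) (y : Fin d → ℝ) : Fin (d + 2) → ℝ :=
  Fin.cons 0 (Fin.snoc y (((d : ℝ) + 1) ^ 2))

/-- The Rote–Santos–Streinu realization `Assoc_{n-2} ⊆ ℝ^{n-2}` (here `n = d + 2`, `d ≥ 1`)
of the associahedron: all `(x_2, …, x_{n-1})` such that, with `x_1 := 0` and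
`x_n := (n-1)^2`, one has `x_j - x_i ≥ (i - j)^2` for all `1 ≤ i < j ≤ n`. -/
def Assoc (d : ℕ) : Set (Fin d → ℝ) :=
  {y | ∀ i j : Fin (d + 2), (i : ℕ) < (j : ℕ) →
    ((i : ℝ) - (j : ℝ)) ^ 2 ≤ assocCoords d y j - assocCoords d y i}

/-! ### Auxiliary lemmas -/

lemma acc_zero {d : ℕ} (y : Fin d → ℝ) : assocCoords d y 0 = 0 := rfl

lemma acc_last {d : ℕ} (y : Fin d → ℝ) :
    assocCoords d y (Fin.last (d + 1)) = ((d : ℝ) + 1) ^ 2 := by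
  rw [← Fin.succ_last, assocCoords, Fin.cons_succ, Fin.snoc_last]

lemma acc_mid {d : ℕ} (y : Fin d → ℝ) (i : Fin d) :
    assocCoords d y i.succ.castSucc = y i := by
  rw [← Fin.succ_castSucc, assocCoords, Fin.cons_succ, Fin.snoc_castSucc]

/-- minimum of finitely many reals indexed by `Fin (m+1)` -/
def vmin : {m : ℕ} → (Fin (m + 1) → ℝ) → ℝ
  | 0, f => f 0
  | _ + 1, f => min (f 0) (vmin (f ∘ Fin.succ))

lemma vmin_le : ∀ {m : ℕ} (f : Fin (m + 1) → ℝ) (j : Fin (m + 1)), vmin f ≤ f j := by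
  intro m
  induction m with
  | zero =>
    intro f j
    cases j using Fin.cases with
    | zero => exact le_refl _
    | succ t => exact t.elim0
  | succ m ih =>
    intro f j
    cases j using Fin.cases with
    | zero => exact min_le_left _ _
    | succ t => exact le_trans (min_le_right _ _) (ih (f ∘ Fin.succ) t)

lemma le_vmin : ∀ {m : ℕ} {f : Fin (m + 1) → ℝ} {c : ℝ}, (∀ j, c ≤ f j) → c ≤ vmin f := by
  intro m
  induction m with
  | zero => intro f c h; exact h 0
  | succ m ih =>
    intro f c h
    exact le_min (h 0) (ih fun j => h j.succ)

lemma vmin_comb_mem {d : ℕ} {S : Set (Fin d → ℝ)} (hS : TropConvex S) :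
    ∀ {m : ℕ} (v : Fin (m + 1) → Fin d → ℝ), (∀ j, v j ∈ S) → ∀ (lam : Fin (m + 1) → ℝ),
      (fun i => vmin (fun j => lam j + v j i) - vmin lam) ∈ S := by
  intro m
  induction m with
  | zero =>
    intro v hv lam
    have : (fun i => vmin (fun j => lam j + v j i) - vmin lam) = v 0 := by
      funext i; show lam 0 + v 0 i - lam 0 = v 0 i; ring
    rw [this]; exact hv 0
  | succ m ih =>
    intro v hv lam
    have hprev := ih (fun j => v j.succ) (fun j => hv j.succ) (fun j => lam j.succ)
    have := hS (v 0) (hv 0) _ hprev (lam 0) (vmin (fun j => lam j.succ))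
    have heq : tropComb (lam 0) (vmin (fun j => lam j.succ)) (v 0)
        (fun i => vmin (fun j => lam j.succ + v j.succ i) - vmin (fun j => lam j.succ))
        = fun i => vmin (fun j => lam j + v j i) - vmin lam := by
      funext i
      show min (lam 0 + v 0 i)
          (vmin (fun j => lam j.succ) + (vmin (fun j => lam j.succ + v j.succ i)
            - vmin (fun j => lam j.succ))) - min (lam 0) (vmin (fun j => lam j.succ))
          = min ((fun j => lam j + v j i) 0) (vmin ((fun j => lam j + v j i) ∘ Fin.succ))
            - min (lam 0) (vmin (lam ∘ Fin.succ))
      have h1 : vmin (fun j => lam j.succ) + (vmin (fun j => lam j.succ + v j.succ i)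
          - vmin (fun j => lam j.succ)) = vmin (fun j => lam j.succ + v j.succ i) := by ring
      rw [h1]
      rfl
    rw [heq] at this
    exact this

/-- the generator coordinates (in homogeneous/extended index `i : ℕ`). -/
def Q (d j i : ℕ) : ℝ :=
  if i ≤ j then (j : ℝ) ^ 2 - ((j : ℝ) - (i : ℝ)) ^ 2
  else ((d : ℝ) + 1) ^ 2 - (((d : ℝ) + 1) - (i : ℝ)) ^ 2

/-- the tropical generators of `Assoc d`. -/
def gen (d : ℕ) (j : Fin (d + 1)) : Fin d → ℝ := fun i => Q d (j : ℕ) ((i : ℕ) + 1)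

lemma acc_gen {d : ℕ} (j : Fin (d + 1)) (k : Fin (d + 2)) :
    assocCoords d (gen d j) k = Q d (j : ℕ) (k : ℕ) := by
  cases k using Fin.cases with
  | zero =>
    rw [acc_zero]
    show (0 : ℝ) = Q d (j : ℕ) 0
    rw [Q, if_pos (Nat.zero_le _)]
    push_cast; ring
  | succ t =>
    cases t using Fin.lastCases with
    | last =>
      rw [Fin.succ_last, acc_last]
      show ((d : ℝ) + 1) ^ 2 = Q d (j : ℕ) (d + 1)
      rw [Q, if_neg (by have := j.isLt; omega)]
      push_cast; ring
    | cast s =>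
      rw [Fin.succ_castSucc, acc_mid]
      rfl

lemma gen_mem {d : ℕ} (j : Fin (d + 1)) : gen d j ∈ Assoc d := by
  intro i k hik
  rw [acc_gen, acc_gen]
  have hk : (k : ℕ) ≤ d + 1 := by have := k.isLt; omega
  have hj : (j : ℕ) ≤ d := by have := j.isLt; omega
  have hikR : ((i : ℕ) : ℝ) < ((k : ℕ) : ℝ) := by exact_mod_cast hik
  have hkR : ((k : ℕ) : ℝ) ≤ (d : ℝ) + 1 := by exact_mod_cast hk
  have hjR : ((j : ℕ) : ℝ) ≤ (d : ℝ) := by exact_mod_cast hj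
  have hiR : (0 : ℝ) ≤ ((i : ℕ) : ℝ) := Nat.cast_nonneg _
  rw [Q, Q]
  split_ifs with hkj hij hij
  · -- i ≤ j, k ≤ j
    have h2R : ((k : ℕ) : ℝ) ≤ ((j : ℕ) : ℝ) := by exact_mod_cast hkj
    nlinarith [mul_nonneg (by linarith : (0:ℝ) ≤ ((k:ℕ):ℝ) - ((i:ℕ):ℝ))
      (by linarith : (0:ℝ) ≤ ((j:ℕ):ℝ) - ((k:ℕ):ℝ))]
  · -- k ≤ j, ¬ i ≤ j : impossible
    omega
  · -- j < k, i ≤ j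
    have h2R : ((j : ℕ) : ℝ) < ((k : ℕ) : ℝ) := by
      have : (j : ℕ) < (k : ℕ) := by omega
      exact_mod_cast this
    have hijR : ((i : ℕ) : ℝ) ≤ ((j : ℕ) : ℝ) := by exact_mod_cast hij
    nlinarith [mul_nonneg (by linarith : (0:ℝ) ≤ ((k:ℕ):ℝ))
      (by linarith : (0:ℝ) ≤ (d:ℝ) + 1 - ((k:ℕ):ℝ)),
      mul_nonneg hiR (by linarith : (0:ℝ) ≤ ((k:ℕ):ℝ) - ((j:ℕ):ℝ))]
  · -- j < i, j < k
    nlinarith [mul_nonneg (by linarith : (0:ℝ) ≤ ((k:ℕ):ℝ) - ((i:ℕ):ℝ))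
      (by linarith : (0:ℝ) ≤ (d:ℝ) + 1 - ((k:ℕ):ℝ))]

lemma tropConvex_assoc {d : ℕ} : TropConvex (Assoc d) := by
  intro x hx y hy l m
  have key : ∀ k : Fin (d + 2), assocCoords d (tropComb l m x y) k
      = min (l + assocCoords d x k) (m + assocCoords d y k) - min l m := by
    intro k
    cases k using Fin.cases with
    | zero => simp [acc_zero]
    | succ t =>
      cases t using Fin.lastCases with
      | last =>
        rw [Fin.succ_last, acc_last, acc_last, acc_last]
        rcases le_total l m with h | h
        · rw [min_eq_left h, min_eq_left (by linarith)]; ring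
        · rw [min_eq_right h, min_eq_right (by linarith)]; ring
      | cast s =>
        rw [Fin.succ_castSucc, acc_mid, acc_mid, acc_mid]
        rfl
  intro i k hik
  rw [key, key]
  have hx' := hx i k hik
  have hy' := hy i k hik
  rcases min_cases (l + assocCoords d x k) (m + assocCoords d y k) with ⟨e1, _⟩ | ⟨e1, _⟩ <;>
    rcases min_cases (l + assocCoords d x i) (m + assocCoords d y i) with ⟨e2, h2⟩ | ⟨e2, h2⟩ <;>
      rw [e1, e2] <;> linarith

lemma convex_assoc {d : ℕ} : Convex ℝ (Assoc d) := by
  intro x hx y hy a b ha hb hab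
  have key : ∀ k : Fin (d + 2), assocCoords d (a • x + b • y) k
      = a * assocCoords d x k + b * assocCoords d y k := by
    intro k
    cases k using Fin.cases with
    | zero => simp [acc_zero]
    | succ t =>
      cases t using Fin.lastCases with
      | last =>
        rw [Fin.succ_last, acc_last, acc_last, acc_last]
        linear_combination (((d : ℝ) + 1) ^ 2) * hab.symm
      | cast s =>
        rw [Fin.succ_castSucc, acc_mid, acc_mid, acc_mid]
        simp [smul_eq_mul]
  intro i k hik
  rw [key, key]
  have h1 := hx i k hik
  have h2 := hy i k hik
  nlinarith [mul_le_mul_of_nonneg_left h1 ha, mul_le_mul_of_nonneg_left h2 hb]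

/-! ### tconv basics -/

lemma tropConvex_tconv {d : ℕ} (V : Set (Fin d → ℝ)) : TropConvex (tconv V) := by
  intro x hx y hy l m
  intro S hS
  exact hS.1 x (hx S hS) y (hy S hS) l m

lemma subset_tconv {d : ℕ} (V : Set (Fin d → ℝ)) : V ⊆ tconv V := by
  intro v hv S hS
  exact hS.2 hv

lemma tconv_subset {d : ℕ} {V S : Set (Fin d → ℝ)} (hS : TropConvex S) (hVS : V ⊆ S) :
    tconv V ⊆ S := fun _ hx => hx S ⟨hS, hVS⟩

/-! ### decomposition of a point of `Assoc d` as a tropical combination of generators -/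

lemma coe_fin_real {n : ℕ} (k : Fin n) : (k : ℝ) = ((k : ℕ) : ℝ) := rfl

lemma assoc_subset_tconv {d : ℕ} :
    Assoc d ⊆ tconv (Set.range (gen d)) := by
  intro y hy
  set lam : Fin (d + 1) → ℝ :=
    fun j => assocCoords d y j.castSucc - ((j : ℕ) : ℝ) ^ 2 with hlam
  have hvalmid : ∀ i : Fin d, ((i.succ.castSucc : Fin (d + 2)) : ℕ) = (i : ℕ) + 1 := by
    intro i; simp
  have hgeneq : ∀ i : Fin d, lam i.succ + gen d i.succ i = y i := by
    intro i
    simp only [hlam, gen, Q]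
    rw [if_pos (by simp)]
    rw [show ((Fin.succ i : Fin (d+1)).castSucc : Fin (d+2)) = i.succ.castSucc from rfl]
    rw [acc_mid]
    rw [show ((Fin.succ i : Fin (d+1)) : ℕ) = (i : ℕ) + 1 from rfl]
    push_cast
    ring
  -- (F1) each lam j is nonnegative
  have F1 : ∀ j, 0 ≤ lam j := by
    intro j
    rcases Nat.eq_zero_or_pos (j : ℕ) with h0 | h0
    · have hj0 : j.castSucc = 0 := by apply Fin.ext; simpa using h0
      simp [hlam, hj0, acc_zero, h0]
    · have h := hy 0 j.castSucc (by simpa using h0)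
      rw [acc_zero, coe_fin_real, coe_fin_real] at h
      simp only [Fin.val_zero, Nat.cast_zero, Fin.coe_castSucc] at h
      simp only [hlam]
      nlinarith [h]
  have F1' : ∀ j : Fin (d + 1), ((j : ℕ) : ℝ) ^ 2 ≤ assocCoords d y j.castSucc := by
    intro j; have := F1 j; simp only [hlam] at this; linarith
  -- (F2) the minimum of lam is 0
  have F2 : vmin lam = 0 := by
    apply le_antisymm
    · have h := vmin_le lam 0
      have h0 : lam 0 = 0 := by simp [hlam, acc_zero]
      linarith
    · exact le_vmin F1
  -- (F3) per-coordinate minimum formula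
  have F3 : ∀ i : Fin d, vmin (fun j => lam j + gen d j i) = y i := by
    intro i
    apply le_antisymm
    · have h := vmin_le (fun j => lam j + gen d j i) i.succ
      rw [hgeneq i] at h
      exact h
    · apply le_vmin
      intro j
      by_cases hcase : (i : ℕ) + 1 ≤ (j : ℕ)
      · rcases eq_or_lt_of_le hcase with hEq | hLt
        · have hj : j = i.succ := by apply Fin.ext; simp [← hEq]
          subst hj
          rw [hgeneq i]
        · -- strict: use the constraint between mid i and castSucc j
          have h := hy i.succ.castSucc j.castSucc (by simpa [hvalmid i] using hLt)
          rw [acc_mid, coe_fin_real, coe_fin_real, hvalmid i] at h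
          simp only [Fin.coe_castSucc] at h
          simp only [gen, Q]
          rw [if_pos hcase]
          have hcastR : ((i : ℕ) : ℝ) + 1 ≤ ((j : ℕ) : ℝ) := by exact_mod_cast hcase
          simp only [hlam]
          push_cast at h ⊢
          nlinarith [h]
      · -- case B : j ≤ i, go through the last coordinate
        have hlast := hy i.succ.castSucc (Fin.last (d + 1))
          (by simp only [hvalmid i, Fin.val_last]; have := i.isLt; omega)
        rw [acc_mid, acc_last, coe_fin_real, coe_fin_real, hvalmid i] at hlast
        simp only [Fin.val_last] at hlast
        have hF := F1' j
        simp only [gen, Q]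
        rw [if_neg hcase]
        simp only [hlam]
        push_cast at hlast ⊢
        nlinarith [hlast, hF]
  -- assemble
  have hmem := vmin_comb_mem (tropConvex_tconv (Set.range (gen d)))
    (gen d) (fun j => subset_tconv _ ⟨j, rfl⟩) lam
  have : (fun i => vmin (fun j => lam j + gen d j i) - vmin lam) = y := by
    funext i
    rw [F2, F3 i]
    ring
  rwa [this] at hmem

/-! ### full-dimensionality -/

def pcenter (d : ℕ) : Fin d → ℝ := fun i => (((i : ℕ) : ℝ) + 1) * ((d : ℝ) + 1)

lemma acc_pcenter {d : ℕ} (k : Fin (d + 2)) :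
    assocCoords d (pcenter d) k = ((k : ℕ) : ℝ) * ((d : ℝ) + 1) := by
  cases k using Fin.cases with
  | zero => simp [acc_zero]
  | succ t =>
    cases t using Fin.lastCases with
    | last =>
      rw [Fin.succ_last, acc_last]
      simp only [Fin.val_last]
      push_cast; ring
    | cast s =>
      rw [Fin.succ_castSucc, acc_mid]
      simp only [pcenter, Fin.coe_castSucc, Fin.val_succ]
      push_cast; ring

lemma pcenter_mem {d : ℕ} : pcenter d ∈ Assoc d := by
  intro i k hik
  rw [acc_pcenter, acc_pcenter, coe_fin_real, coe_fin_real]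
  have hik' : ((i : ℕ) : ℝ) + 1 ≤ ((k : ℕ) : ℝ) := by exact_mod_cast hik
  have hk : ((k : ℕ) : ℝ) ≤ (d : ℝ) + 1 := by
    have := k.isLt; exact_mod_cast Nat.lt_succ_iff.mp (by omega)
  nlinarith [mul_nonneg (by linarith : (0:ℝ) ≤ ((k:ℕ):ℝ) - ((i:ℕ):ℝ))
    (by linarith [Nat.cast_nonneg (i : ℕ) (α := ℝ)] : (0:ℝ) ≤ (d:ℝ) + 1 - ((k:ℕ):ℝ) + ((i:ℕ):ℝ))]

def pshift (d : ℕ) (m : Fin d) : Fin d → ℝ :=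
  Function.update (pcenter d) m (pcenter d m + 1)

lemma acc_pshift {d : ℕ} (m : Fin d) (k : Fin (d + 2)) :
    assocCoords d (pshift d m) k
      = ((k : ℕ) : ℝ) * ((d : ℝ) + 1) + (if k = m.succ.castSucc then 1 else 0) := by
  have hvm : ((m.succ.castSucc : Fin (d + 2)) : ℕ) = (m : ℕ) + 1 := by simp
  cases k using Fin.cases with
  | zero =>
    rw [if_neg (by
      intro h
      have hv := congrArg Fin.val h
      rw [hvm] at hv
      simp at hv)]
    simp [acc_zero]
  | succ t =>
    cases t using Fin.lastCases with
    | last =>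
      rw [Fin.succ_last, acc_last]
      rw [if_neg (by
        intro h
        have hv := congrArg Fin.val h
        rw [hvm] at hv
        simp at hv
        have := m.isLt; omega)]
      simp only [Fin.val_last]
      push_cast; ring
    | cast s =>
      rw [Fin.succ_castSucc, acc_mid]
      by_cases hsm : s = m
      · subst hsm
        rw [if_pos rfl]
        simp only [pshift, Function.update_self]
        simp only [pcenter, Fin.coe_castSucc, Fin.val_succ]
        push_cast; ring
      · rw [if_neg (by
          intro h
          have hv := congrArg Fin.val h
          simp [hvm] at hv
          exact hsm (Fin.ext hv))]
        simp only [pshift, Function.update_of_ne hsm]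
        simp only [pcenter, Fin.coe_castSucc, Fin.val_succ]
        push_cast; ring

lemma pshift_mem {d : ℕ} (hd : 1 ≤ d) (m : Fin d) : pshift d m ∈ Assoc d := by
  intro i k hik
  rw [acc_pshift, acc_pshift, coe_fin_real, coe_fin_real]
  have hvm : ((m.succ.castSucc : Fin (d + 2)) : ℕ) = (m : ℕ) + 1 := by simp
  have hik' : ((i : ℕ) : ℝ) + 1 ≤ ((k : ℕ) : ℝ) := by exact_mod_cast hik
  have hk : ((k : ℕ) : ℝ) ≤ (d : ℝ) + 1 := by
    have := k.isLt; exact_mod_cast Nat.lt_succ_iff.mp (by omega)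
  have hi0 : (0:ℝ) ≤ ((i:ℕ):ℝ) := Nat.cast_nonneg _
  have hdR : (1:ℝ) ≤ (d:ℝ) := by exact_mod_cast hd
  split_ifs with h1 h2 h2
  · exact absurd hik (by rw [h2.trans h1.symm]; exact lt_irrefl _)
  · -- k = mid m, i ≠ mid m : slack +1
    nlinarith [mul_nonneg (by linarith : (0:ℝ) ≤ ((k:ℕ):ℝ) - ((i:ℕ):ℝ))
      (by linarith : (0:ℝ) ≤ (d:ℝ) + 1 - ((k:ℕ):ℝ) + ((i:ℕ):ℝ))]
  · -- i = mid m, k ≠ mid m : slack -1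
    have hi1 : 1 ≤ (i : ℕ) := by
      have := congrArg Fin.val h2
      simp [hvm] at this
      omega
    have hi1R : (1:ℝ) ≤ ((i:ℕ):ℝ) := by exact_mod_cast hi1
    nlinarith [mul_nonneg (by linarith : (0:ℝ) ≤ ((k:ℕ):ℝ) - ((i:ℕ):ℝ) - 1)
      (by linarith : (0:ℝ) ≤ (d:ℝ) - (((k:ℕ):ℝ) - ((i:ℕ):ℝ)))]
  · nlinarith [mul_nonneg (by linarith : (0:ℝ) ≤ ((k:ℕ):ℝ) - ((i:ℕ):ℝ))
      (by linarith : (0:ℝ) ≤ (d:ℝ) + 1 - ((k:ℕ):ℝ) + ((i:ℕ):ℝ))]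

lemma span_top {d : ℕ} (hd : 1 ≤ d) : affineSpan ℝ (Assoc d) = ⊤ := by
  have hp := pcenter_mem (d := d)
  have hsingle : ∀ m : Fin d, Pi.single m (1 : ℝ) ∈ (affineSpan ℝ (Assoc d)).direction := by
    intro m
    rw [direction_affineSpan]
    have h := vsub_mem_vectorSpan ℝ (pshift_mem hd m) hp
    have heq : pshift d m -ᵥ pcenter d = Pi.single m (1 : ℝ) := by
      rw [vsub_eq_sub]
      funext t
      rw [Pi.sub_apply]
      by_cases htm : t = m
      · subst htm
        simp [pshift, Function.update_self]
      · simp [pshift, Function.update_of_ne htm, Pi.single_apply, htm]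
    rwa [heq] at h
  rw [eq_top_iff]
  intro x _
  have hxp : x - pcenter d ∈ (affineSpan ℝ (Assoc d)).direction := by
    have hx : x - pcenter d = ∑ m : Fin d, (x m - pcenter d m) • (Pi.single m 1 : Fin d → ℝ) := by
      funext t
      simp [Finset.sum_apply, Pi.single_apply, Pi.sub_apply, mul_ite]
    rw [hx]
    exact Submodule.sum_mem _ fun m _ => Submodule.smul_mem _ _ (hsingle m)
  have hpmem : pcenter d ∈ affineSpan ℝ (Assoc d) := subset_affineSpan ℝ _ hp
  have := AffineSubspace.vadd_mem_of_mem_direction hxp hpmem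
  have hxx : (x - pcenter d) +ᵥ pcenter d = x := by
    funext t; show (x - pcenter d) t + pcenter d t = x t; simp
  rwa [hxx] at this


/-- For `n = d + 2 ≥ 3`, the associahedron realization `Assoc_{n-2}` is a
polytrope of affine dimension `n - 2`; in particular it is tropically convex and a
tropical polytope. -/
theorem associahedron_is_polytrope (d : ℕ) (hd : 1 ≤ d) :
    IsPolytrope (Assoc d) ∧ affineSpan ℝ (Assoc d) = ⊤ ∧
      TropConvex (Assoc d) ∧ IsTropPolytope (Assoc d) := by
  have htp : IsTropPolytope (Assoc d) := by
    refine ⟨(Finset.univ : Finset (Fin (d + 1))).image (gen d), ?_⟩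
    have hco : (((Finset.univ : Finset (Fin (d + 1))).image (gen d) : Finset (Fin d → ℝ)) : Set (Fin d → ℝ))
        = Set.range (gen d) := by
      rw [Finset.coe_image, Finset.coe_univ, Set.image_univ]
    rw [hco]
    apply Set.Subset.antisymm
    · exact assoc_subset_tconv
    · exact tconv_subset tropConvex_assoc (Set.range_subset_iff.mpr gen_mem)
  exact ⟨⟨htp, convex_assoc⟩, span_top hd, tropConvex_assoc, htp⟩
end
end
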